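/- Let s be a finite set of indices, let p > 1 and q with 1/p + 1/q = 1. Let K : ι × ι → ℝ be positive on s × s, let f : ι → ℝ be nonnegative on s, and let φ, ψ : ι → ℝ be positive on s. Define F(x) = ∑_{y∈s} K(x,y)·ψ(y)^(−p) and G(y) = ∑_{x∈s} K(x,y)·φ(x)^(−q). Then ∑_{y∈s} G(y)^(1−p)·ψ(y)^(−p)·(∑_{x∈s} K(x,y)·f(x))^p ≤ ∑_{x∈s} φ(x)^p·F(x)·f(x)^p. (The Hardy inequality (6) of Theorem 3.4 in the discrete case, i.e. the time scale 𝕋 = ℤ with α = 1.) -/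

import Mathlib

open Finset

/-- Hardy inequality (6) of Theorem 3.4, discrete case 𝕋 = ℤ, α = 1. -/
theorem hardy_inequality_discrete {ι : Type*}
    (s : Finset ι) (p q : ℝ) (K : ι × ι → ℝ) (f φ ψ : ι → ℝ)
    (hp : 1 < p) (hpq : 1 / p + 1 / q = 1)
    (hKpos : ∀ x ∈ s, ∀ y ∈ s, 0 < K (x, y))
    (hfnn : ∀ k ∈ s, 0 ≤ f k)
    (hφpos : ∀ k ∈ s, 0 < φ k) (hψpos : ∀ k ∈ s, 0 < ψ k)
    (F G : ι → ℝ)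
    (hF : ∀ x, F x = ∑ y ∈ s, K (x, y) * ψ y ^ (-p))
    (hG : ∀ y, G y = ∑ x ∈ s, K (x, y) * φ x ^ (-q)) :
    (∑ y ∈ s, G y ^ (1 - p) * ψ y ^ (-p) * (∑ x ∈ s, K (x, y) * f x) ^ p)
      ≤ ∑ x ∈ s, φ x ^ p * F x * f x ^ p := by
  have hp0 : (0:ℝ) < p := lt_trans one_pos hp
  have hpne : p ≠ 0 := ne_of_gt hp0
  classical
  have hc : Real.HolderConjugate p q := Real.holderConjugate_iff.mpr ⟨hp, by rw [← one_div, ← one_div]; exact hpq⟩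
  have hq : q * (p - 1) = p := by rw [mul_comm]; exact hc.sub_one_mul_conj
  -- key pointwise estimate
  have key : ∀ y ∈ s,
      G y ^ (1 - p) * ψ y ^ (-p) * (∑ x ∈ s, K (x, y) * f x) ^ p
        ≤ ψ y ^ (-p) * ∑ x ∈ s, K (x, y) * (φ x ^ p * f x ^ p) := by
    intro y hy
    have hGpos : 0 < G y := by
      rw [hG]
      apply Finset.sum_pos
      · intro x hx
        exact mul_pos (hKpos x hx y hy) (Real.rpow_pos_of_pos (hφpos x hx) _)
      · exact ⟨y, hy⟩
    set w : ι → ℝ := fun x => if x ∈ s then K (x, y) * φ x ^ (-q) else 0 with hw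
    set u : ι → ℝ := fun x => if x ∈ s then φ x ^ q * f x else 0 with hu
    have hwnn : ∀ x, 0 ≤ w x := by
      intro x
      simp only [hw]
      split
      · exact le_of_lt (mul_pos (hKpos x ‹_› y hy) (Real.rpow_pos_of_pos (hφpos x ‹_›) _))
      · exact le_rfl
    have hunn : ∀ x, 0 ≤ u x := by
      intro x
      simp only [hu]
      split
      · exact mul_nonneg (le_of_lt (Real.rpow_pos_of_pos (hφpos x ‹_›) _)) (hfnn x ‹_›)
      · exact le_rfl
    have holder := Real.inner_le_weight_mul_Lp_of_nonneg s (le_of_lt hp) w u hwnn hunn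
    have h1 : ∑ x ∈ s, w x * u x = ∑ x ∈ s, K (x, y) * f x := by
      apply Finset.sum_congr rfl
      intro x hx
      simp only [hw, hu, if_pos hx]
      have : φ x ^ (-q) * φ x ^ q = 1 := by
        rw [← Real.rpow_add (hφpos x hx)]
        simp
      calc K (x, y) * φ x ^ (-q) * (φ x ^ q * f x)
          = K (x, y) * (φ x ^ (-q) * φ x ^ q) * f x := by ring
        _ = K (x, y) * f x := by rw [this]; ring
    have h2 : ∑ x ∈ s, w x = G y := by
      rw [hG]
      apply Finset.sum_congr rfl
      intro x hx
      simp only [hw, if_pos hx]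
    have h3 : ∑ x ∈ s, w x * u x ^ p = ∑ x ∈ s, K (x, y) * (φ x ^ p * f x ^ p) := by
      apply Finset.sum_congr rfl
      intro x hx
      simp only [hw, hu, if_pos hx]
      rw [Real.mul_rpow (le_of_lt (Real.rpow_pos_of_pos (hφpos x hx) _)) (hfnn x hx),
        ← Real.rpow_mul (le_of_lt (hφpos x hx))]
      have : φ x ^ (-q) * φ x ^ (q * p) = φ x ^ p := by
        rw [← Real.rpow_add (hφpos x hx)]
        congr 1
        nlinarith [hq]
      calc K (x, y) * φ x ^ (-q) * (φ x ^ (q * p) * f x ^ p)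
          = K (x, y) * (φ x ^ (-q) * φ x ^ (q * p)) * f x ^ p := by ring
        _ = K (x, y) * (φ x ^ p * f x ^ p) := by rw [this]; ring
    rw [h1, h2, h3] at holder
    set S := ∑ x ∈ s, K (x, y) * f x with hS
    set T := ∑ x ∈ s, K (x, y) * (φ x ^ p * f x ^ p) with hT
    have hSnn : 0 ≤ S := by
      apply Finset.sum_nonneg
      intro x hx
      exact mul_nonneg (le_of_lt (hKpos x hx y hy)) (hfnn x hx)
    have hTnn : 0 ≤ T := by
      apply Finset.sum_nonneg
      intro x hx
      exact mul_nonneg (le_of_lt (hKpos x hx y hy))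
        (mul_nonneg (le_of_lt (Real.rpow_pos_of_pos (hφpos x hx) _))
          (Real.rpow_nonneg (hfnn x hx) _))
    have hSp : S ^ p ≤ G y ^ (p - 1) * T := by
      have hrhs_nn : 0 ≤ G y ^ (1 - p⁻¹) := Real.rpow_nonneg (le_of_lt hGpos) _
      have h := Real.rpow_le_rpow hSnn holder (le_of_lt hp0)
      have e1 : (1 - p⁻¹) * p = p - 1 := by field_simp
      have e2 : p⁻¹ * p = 1 := inv_mul_cancel₀ hpne
      rwa [Real.mul_rpow hrhs_nn (Real.rpow_nonneg hTnn _),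
        ← Real.rpow_mul (le_of_lt hGpos), ← Real.rpow_mul hTnn,
        e1, e2, Real.rpow_one] at h
    have hψnn : 0 ≤ ψ y ^ (-p) := le_of_lt (Real.rpow_pos_of_pos (hψpos y hy) _)
    have hGfac : 0 ≤ G y ^ (1 - p) := Real.rpow_nonneg (le_of_lt hGpos) _
    calc G y ^ (1 - p) * ψ y ^ (-p) * S ^ p
        ≤ G y ^ (1 - p) * ψ y ^ (-p) * (G y ^ (p - 1) * T) := by
          exact mul_le_mul_of_nonneg_left hSp (mul_nonneg hGfac hψnn)
      _ = (G y ^ (1 - p) * G y ^ (p - 1)) * (ψ y ^ (-p) * T) := by ring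
      _ = ψ y ^ (-p) * T := by
          rw [← Real.rpow_add hGpos]
          norm_num
  calc (∑ y ∈ s, G y ^ (1 - p) * ψ y ^ (-p) * (∑ x ∈ s, K (x, y) * f x) ^ p)
      ≤ ∑ y ∈ s, ψ y ^ (-p) * ∑ x ∈ s, K (x, y) * (φ x ^ p * f x ^ p) :=
        Finset.sum_le_sum key
    _ = ∑ x ∈ s, φ x ^ p * F x * f x ^ p := by
        simp_rw [Finset.mul_sum]
        rw [Finset.sum_comm]
        apply Finset.sum_congr rfl
        intro x _
        rw [hF, Finset.mul_sum, Finset.sum_mul]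
        apply Finset.sum_congr rfl
        intro y _
        ring
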